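/- Let V be a finite-dimensional complex vector space with dim V ≥ 4, equipped with a nondegenerate symmetric bilinear form B. Fix vectors f, k, τ ∈ V with B(f,f) = 0, B(k,f) ≠ 0, B(τ,τ) ≠ 0, and B(τ,k) = B(τ,f) = 0. Let W₀ be the span of f and k, and W₁ the span of f, k and τ. If P, P' : V × V → ℂ are polynomial maps, each invariant under the diagonal action of SO(V; f) (i.e. P(Tx,Ty) = P(x,y) and P'(Tx,Ty) = P'(x,y) for every T ∈ SO(V;f)), and if P(x,y) = P'(x,y) for all (x,y) ∈ W₀ × W₁, then P(x,y) = P'(x,y) for all (x,y) ∈ V × V. -/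

import Mathlib

set_option maxHeartbeats 1000000

section Helpers

variable {V : Type*} [AddCommGroup V] [Module ℂ V]

/-- Reflection in the hyperplane orthogonal to `u`. -/
noncomputable def bref (B : V →ₗ[ℂ] V →ₗ[ℂ] ℂ) (u : V) : V →ₗ[ℂ] V :=
  LinearMap.id - ((2 / B u u) • (B u)).smulRight u

lemma bref_apply (B : V →ₗ[ℂ] V →ₗ[ℂ] ℂ) (u x : V) :
    bref B u x = x - (2 / B u u * B u x) • u := by
  simp [bref, LinearMap.smulRight_apply, smul_smul]

variable (B : V →ₗ[ℂ] V →ₗ[ℂ] ℂ)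

lemma bref_isometry (hBsymm : ∀ x y : V, B x y = B y x) {u : V} (hu : B u u ≠ 0) (x y : V) :
    B (bref B u x) (bref B u y) = B x y := by
  simp only [bref_apply, map_sub, map_smul, LinearMap.sub_apply, LinearMap.smul_apply,
    smul_eq_mul]
  rw [hBsymm x u]
  field_simp
  ring

lemma bref_bref {u : V} (hu : B u u ≠ 0) (x : V) :
    bref B u (bref B u x) = x := by
  simp only [bref_apply, map_sub, map_smul, smul_eq_mul]
  match_scalars
  · ring
  · field_simp
    ring

lemma bref_fix {u : V} (v : V) (huv : B u v = 0) : bref B u v = v := by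
  simp [bref_apply, huv]

lemma bref_map (hBsymm : ∀ x y : V, B x y = B y x) {u a b : V} (hu : B u u ≠ 0)
    (hab : B a a = B b b) (huab : u = a - b) :
    bref B u a = b := by
  have h1 : B u a = B u u / 2 := by
    subst huab
    simp only [map_sub, LinearMap.sub_apply]
    rw [hBsymm a b]
    linear_combination hab / 2
  rw [bref_apply, h1]
  have h2 : 2 / B u u * (B u u / 2) = 1 := by field_simp
  rw [h2, one_smul, huab]
  abel

lemma bref_neg_self {u : V} (hu : B u u ≠ 0) : bref B u u = -u := by
  rw [bref_apply]
  have h2 : 2 / B u u * B u u = 2 := by field_simp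
  rw [h2]
  module

lemma bref_det [FiniteDimensional ℂ V] {ι : Type*} [Fintype ι] [DecidableEq ι]
    (bV : Module.Basis ι ℂ V) {u : V} (hu : B u u ≠ 0) :
    LinearMap.det (bref B u) = -1 := by
  rw [← LinearMap.det_toMatrix bV]
  have hM : LinearMap.toMatrix bV bV (bref B u) =
      1 + Matrix.replicateCol Unit (fun i => -(bV.repr u i)) *
        Matrix.replicateRow Unit (fun j => 2 / B u u * B u (bV j)) := by
    ext i j
    rw [LinearMap.toMatrix_apply, bref_apply]
    simp only [map_sub, map_smul, Module.Basis.repr_self, Matrix.add_apply, Matrix.one_apply,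
      Matrix.mul_apply, Matrix.replicateCol_apply, Matrix.replicateRow_apply, Finsupp.sub_apply,
      Finsupp.smul_apply, Finsupp.single_apply, smul_eq_mul, Finset.univ_unique,
      Finset.sum_singleton]
    rcases eq_or_ne i j with h | h <;> simp [h, eq_comm] <;> ring
  rw [hM, Matrix.det_one_add_replicateCol_mul_replicateRow]
  have huu : ∑ j, bV.repr u j * B u (bV j) = B u u := by
    calc ∑ j, bV.repr u j * B u (bV j) = B u (∑ j, bV.repr u j • bV j) := by
          rw [map_sum]; simp [smul_eq_mul]
      _ = B u u := by rw [bV.sum_repr u]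
  have hsum : dotProduct (fun j => 2 / B u u * B u (bV j))
      (fun i => -(bV.repr u i)) = -2 := by
    simp only [dotProduct]
    have hterm : ∀ j, (2 / B u u * B u (bV j)) * (-(bV.repr u j)) =
        -(2 / B u u) * (bV.repr u j * B u (bV j)) := fun j => by ring
    rw [Finset.sum_congr rfl fun j _ => hterm j, ← Finset.mul_sum, huu]
    field_simp
  rw [hsum]
  norm_num

/-- Eichler (Siegel) transformation attached to isotropic `f` and `w ⊥ f`. -/
noncomputable def eich (B : V →ₗ[ℂ] V →ₗ[ℂ] ℂ) (f w : V) : V →ₗ[ℂ] V :=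
  LinearMap.id + (B w).smulRight f - (B f).smulRight w - ((B w w / 2) • (B f)).smulRight f

lemma eich_apply (B : V →ₗ[ℂ] V →ₗ[ℂ] ℂ) (f w x : V) :
    eich B f w x = x + B w x • f - B f x • w - (B w w / 2 * B f x) • f := by
  simp [eich, LinearMap.smulRight_apply, smul_smul]

variable (f : V)

lemma eich_f (hff : B f f = 0) {w : V} (hwf : B w f = 0) : eich B f w f = f := by
  simp [eich_apply, hff, hwf]

lemma eich_zero : eich B f 0 = LinearMap.id := by
  ext x; simp [eich_apply]

lemma eich_comp (hBsymm : ∀ x y : V, B x y = B y x) (hff : B f f = 0)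
    {w w' : V} (hwf : B w f = 0) (hw'f : B w' f = 0) (x : V) :
    eich B f w' (eich B f w x) = eich B f (w + w') x := by
  have hfw : B f w = 0 := by rw [hBsymm f w, hwf]
  have hfw' : B f w' = 0 := by rw [hBsymm f w', hw'f]
  simp only [eich_apply, map_add, map_sub, map_smul, LinearMap.add_apply, LinearMap.sub_apply,
    LinearMap.smul_apply, smul_eq_mul, hff, hfw, hfw', hwf, hw'f]
  rw [hBsymm w' w]
  match_scalars <;> ring

lemma eich_isometry (hBsymm : ∀ x y : V, B x y = B y x) (hff : B f f = 0)
    {w : V} (hwf : B w f = 0) (x y : V) :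
    B (eich B f w x) (eich B f w y) = B x y := by
  have hfw : B f w = 0 := by rw [hBsymm f w, hwf]
  simp only [eich_apply, map_add, map_sub, map_smul, LinearMap.add_apply, LinearMap.sub_apply,
    LinearMap.smul_apply, smul_eq_mul, hff, hfw, hwf]
  rw [hBsymm x f, hBsymm x w]
  ring

/-- Any isometry of a nondegenerate bilinear form has determinant `±1`. -/
lemma detsq [FiniteDimensional ℂ V] {ι : Type*} [Fintype ι] [DecidableEq ι]
    (hBnd : ∀ x : V, (∀ y : V, B x y = 0) → x = 0)
    (bV : Module.Basis ι ℂ V) (T : V →ₗ[ℂ] V) (hT : ∀ x y, B (T x) (T y) = B x y) :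
    LinearMap.det T ^ 2 = 1 := by
  have hB : LinearMap.BilinForm.Nondegenerate B :=
    .ofSeparatingLeft (fun x hx => hBnd x hx)
  have hG : (LinearMap.BilinForm.toMatrix bV B).det ≠ 0 :=
    (LinearMap.BilinForm.nondegenerate_iff_det_ne_zero bV).mp hB
  have hcomp : LinearMap.BilinForm.comp B T T = B := by
    ext x y; exact hT x y
  have h2 := congrArg (fun M => Matrix.det M)
    (congrArg (LinearMap.BilinForm.toMatrix bV) hcomp)
  rw [LinearMap.BilinForm.toMatrix_comp bV bV] at h2
  simp only [Matrix.det_mul, Matrix.det_transpose] at h2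
  have h3 := LinearMap.det_toMatrix bV T
  rw [h3] at h2
  exact mul_right_cancel₀ hG (by linear_combination h2)

lemma eich_det [FiniteDimensional ℂ V] {ι : Type*} [Fintype ι] [DecidableEq ι]
    (hBsymm : ∀ x y : V, B x y = B y x)
    (hBnd : ∀ x : V, (∀ y : V, B x y = 0) → x = 0)
    (bV : Module.Basis ι ℂ V) (hff : B f f = 0) {w : V} (hwf : B w f = 0) :
    LinearMap.det (eich B f w) = 1 := by
  have hw2 : B ((2⁻¹ : ℂ) • w) f = 0 := by
    rw [map_smul]; simp [hwf]
  have hcomp : eich B f w = (eich B f ((2⁻¹ : ℂ) • w)) ∘ₗ (eich B f ((2⁻¹ : ℂ) • w)) := by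
    ext x
    rw [LinearMap.comp_apply, eich_comp B f hBsymm hff hw2 hw2]
    congr 1
    rw [← add_smul]
    norm_num
  rw [hcomp, LinearMap.det_comp, ← sq]
  exact detsq B hBnd bV _ (eich_isometry B f hBsymm hff hw2)

/-- There is an anisotropic vector orthogonal to `f`, `k`, `τ`. -/
lemma exists_aniso [FiniteDimensional ℂ V] (hdim : 4 ≤ Module.finrank ℂ V)
    (hBsymm : ∀ x y : V, B x y = B y x)
    (hBnd : ∀ x : V, (∀ y : V, B x y = 0) → x = 0)
    (k τ : V)
    (hff : B f f = 0) (hkf : B k f ≠ 0) (hττ : B τ τ ≠ 0)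
    (hτk : B τ k = 0) (hτf : B τ f = 0) :
    ∃ v : V, B v f = 0 ∧ B v k = 0 ∧ B v τ = 0 ∧ B v v ≠ 0 := by
  set κ := B k f with hκ
  set L : V →ₗ[ℂ] (Fin 3 → ℂ) := LinearMap.pi ![B.flip f, B.flip k, B.flip τ] with hL
  have hmem : ∀ v : V, v ∈ LinearMap.ker L ↔ (B v f = 0 ∧ B v k = 0 ∧ B v τ = 0) := by
    intro v
    rw [LinearMap.mem_ker]
    constructor
    · intro h
      refine ⟨?_, ?_, ?_⟩
      · have := congrFun h 0; simpa [hL] using this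
      · have := congrFun h 1; simpa [hL] using this
      · have := congrFun h 2; simpa [hL] using this
    · intro ⟨h1, h2, h3⟩
      funext i
      fin_cases i <;> simp [hL, h1, h2, h3]
  have hker : LinearMap.ker L ≠ ⊥ := by
    intro hbot
    have h1 := LinearMap.finrank_range_add_finrank_ker L
    have h2 : Module.finrank ℂ (LinearMap.range L) ≤ 3 := by
      have := Submodule.finrank_le (LinearMap.range L)
      simpa using this.trans_eq (by simp [Module.finrank_pi])
    rw [hbot] at h1; rw [finrank_bot ℂ V] at h1
    omega
  obtain ⟨z, hzmem, hz0⟩ := Submodule.exists_mem_ne_zero_of_ne_bot hker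
  obtain ⟨hzf, hzk, hzτ⟩ := (hmem z).mp hzmem
  have hz' : ∃ z' : V, (B z' f = 0 ∧ B z' k = 0 ∧ B z' τ = 0) ∧ B z z' ≠ 0 := by
    by_contra h
    push_neg at h
    apply hz0
    apply hBnd
    intro v
    set pv : V := (B v k / κ - B v f * B k k / κ ^ 2) • f + (B v f / κ) • k
      + (B v τ / B τ τ) • τ with hpv
    have hfk : B f k = κ := by rw [hBsymm f k]
    have hfτ : B f τ = 0 := by rw [hBsymm f τ, hτf]
    have hkτ : B k τ = 0 := by rw [hBsymm k τ, hτk]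
    have h1 : B (v - pv) f = 0 := by
      simp only [hpv, map_sub, map_add, map_smul, LinearMap.sub_apply, LinearMap.add_apply,
        LinearMap.smul_apply, smul_eq_mul, hff, hτf]
      field_simp
      rw [hκ]
      ring
    have h2 : B (v - pv) k = 0 := by
      simp only [hpv, map_sub, map_add, map_smul, LinearMap.sub_apply, LinearMap.add_apply,
        LinearMap.smul_apply, smul_eq_mul, hfk, hτk]
      field_simp
      ring
    have h3 : B (v - pv) τ = 0 := by
      simp only [hpv, map_sub, map_add, map_smul, LinearMap.sub_apply, LinearMap.add_apply,
        LinearMap.smul_apply, smul_eq_mul, hfτ, hkτ]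
      field_simp
      ring
    have hv : B z (v - pv) = 0 := h (v - pv) ⟨h1, h2, h3⟩
    have hpv0 : B z pv = 0 := by
      simp only [hpv, map_add, map_smul, smul_eq_mul, hzf, hzk, hzτ]
      ring
    calc B z v = B z (pv + (v - pv)) := by rw [add_sub_cancel]
      _ = 0 := by rw [map_add, hv, hpv0, add_zero]
  obtain ⟨z', ⟨hz'f, hz'k, hz'τ⟩, hzz'⟩ := hz'
  rcases ne_or_eq (B z z) 0 with h | hz2
  · exact ⟨z, hzf, hzk, hzτ, h⟩
  rcases ne_or_eq (B z' z') 0 with h | hz'2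
  · exact ⟨z', hz'f, hz'k, hz'τ, h⟩
  refine ⟨z + z', by simp [hzf, hz'f], by simp [hzk, hz'k], by simp [hzτ, hz'τ], ?_⟩
  have hexp : B (z + z') (z + z') = 2 * B z z' := by
    simp only [map_add, LinearMap.add_apply, hz2, hz'2]
    rw [hBsymm z' z]
    ring
  rw [hexp]
  simpa using hzz'

/-- Reflection as a linear equivalence. -/
noncomputable def brefE (u : V) (hu : B u u ≠ 0) : V ≃ₗ[ℂ] V :=
  LinearEquiv.ofLinear (bref B u) (bref B u)
    (by ext x; exact bref_bref B hu x) (by ext x; exact bref_bref B hu x)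

/-- Eichler transformation as a linear equivalence. -/
noncomputable def eichE (hBsymm : ∀ x y : V, B x y = B y x) (hff : B f f = 0)
    {w : V} (hwf : B w f = 0) : V ≃ₗ[ℂ] V :=
  LinearEquiv.ofLinear (eich B f w) (eich B f (-w))
    (by
      have hnwf : B (-w) f = 0 := by rw [map_neg, LinearMap.neg_apply, hwf, neg_zero]
      ext x
      rw [LinearMap.comp_apply, LinearMap.id_apply,
        eich_comp B f hBsymm hff hnwf hwf, neg_add_cancel, eich_zero, LinearMap.id_apply])
    (by
      have hnwf : B (-w) f = 0 := by rw [map_neg, LinearMap.neg_apply, hwf, neg_zero]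
      ext x
      rw [LinearMap.comp_apply, LinearMap.id_apply,
        eich_comp B f hBsymm hff hwf hnwf, add_neg_cancel, eich_zero, LinearMap.id_apply])

lemma brefE_apply (u : V) (hu : B u u ≠ 0) (x : V) : brefE B u hu x = bref B u x := rfl

lemma brefE_coe (u : V) (hu : B u u ≠ 0) : (brefE B u hu : V →ₗ[ℂ] V) = bref B u := rfl

lemma eichE_apply (hBsymm : ∀ x y : V, B x y = B y x) (hff : B f f = 0)
    {w : V} (hwf : B w f = 0) (x : V) : eichE B f hBsymm hff hwf x = eich B f w x := rfl

lemma eichE_coe (hBsymm : ∀ x y : V, B x y = B y x) (hff : B f f = 0)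
    {w : V} (hwf : B w f = 0) : (eichE B f hBsymm hff hwf : V →ₗ[ℂ] V) = eich B f w := rfl

/-- The key geometric lemma: for generic `(x, y)` there is a special isometry fixing `f`
moving `x` into `span {f, k}` and `y` into `span {f, k, τ}`. -/
lemma exists_T [FiniteDimensional ℂ V] {ι : Type*} [Fintype ι] [DecidableEq ι]
    (bV : Module.Basis ι ℂ V)
    (hdim : 4 ≤ Module.finrank ℂ V)
    (hBsymm : ∀ x y : V, B x y = B y x)
    (hBnd : ∀ x : V, (∀ y : V, B x y = 0) → x = 0)
    (k τ : V)
    (hff : B f f = 0) (hkf : B k f ≠ 0) (hττ : B τ τ ≠ 0)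
    (hτk : B τ k = 0) (hτf : B τ f = 0)
    (x y : V) (hc : B x f ≠ 0)
    (hD : B (B x f • y - B y f • x) (B x f • y - B y f • x) ≠ 0) :
    ∃ T : V ≃ₗ[ℂ] V, (∀ a b : V, B (T a) (T b) = B a b) ∧
      LinearMap.det (T : V →ₗ[ℂ] V) = 1 ∧ T f = f ∧
      T x ∈ Submodule.span ℂ ({f, k} : Set V) ∧
      T y ∈ Submodule.span ℂ ({f, k, τ} : Set V) := by
  have hκ : B k f ≠ 0 := hkf
  set c := B x f with hcdef
  set d := B y f with hddef
  set w : V := c⁻¹ • x - (B k f)⁻¹ • k with hwdef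
  have hwf : B w f = 0 := by
    rw [hwdef]
    simp only [map_sub, map_smul, LinearMap.sub_apply, LinearMap.smul_apply, smul_eq_mul,
      ← hcdef]
    field_simp
    ring
  have hfw : B f w = 0 := by rw [hBsymm f w, hwf]
  have hEiso := eich_isometry B f hBsymm hff hwf
  have hEf : eich B f w f = f := eich_f B f hff hwf
  have hBfx : B f x = c := by rw [hcdef]; exact hBsymm f x
  have hBfy : B f y = d := by rw [hddef]; exact hBsymm f y
  obtain ⟨γ, hEx⟩ : ∃ γ : ℂ, eich B f w x = (c * (B k f)⁻¹) • k + γ • f := by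
    refine ⟨B w x - B w w / 2 * c, ?_⟩
    rw [eich_apply, hBfx, hwdef]
    match_scalars <;> field_simp <;> ring
  set z := eich B f w y with hzdef
  have hzf : B z f = d := by
    have h := hEiso y f
    rw [hEf] at h
    exact h.trans hddef.symm
  set bb := d / B k f with hbbdef
  set aa := (B z k - bb * B k k) / B k f with haadef
  set y₁ := z - aa • f - bb • k with hy₁def
  have hy₁f : B y₁ f = 0 := by
    rw [hy₁def]
    simp only [map_sub, map_smul, LinearMap.sub_apply, LinearMap.smul_apply, smul_eq_mul,
      hzf, hff, hbbdef]
    field_simp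
    ring
  have hfk : B f k = B k f := hBsymm f k
  have hy₁k : B y₁ k = 0 := by
    rw [hy₁def]
    simp only [map_sub, map_smul, LinearMap.sub_apply, LinearMap.smul_apply, smul_eq_mul,
      hfk]
    rw [haadef]
    field_simp
    ring
  set u := y - (d * c⁻¹) • x with hudef
  have huf : B u f = 0 := by
    rw [hudef]
    simp only [map_sub, map_smul, LinearMap.sub_apply, LinearMap.smul_apply, smul_eq_mul,
      ← hcdef, ← hddef]
    field_simp
    ring
  have hQu : B u u ≠ 0 := by
    have hrepr : u = c⁻¹ • (c • y - d • x) := by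
      rw [hudef]; match_scalars <;> field_simp
    rw [hrepr]
    simp only [map_smul, LinearMap.smul_apply, smul_eq_mul]
    exact mul_ne_zero (inv_ne_zero hc) (mul_ne_zero (inv_ne_zero hc) hD)
  have hy₁E : y₁ = eich B f w u + (d * c⁻¹ * γ - aa) • f := by
    have hEu : eich B f w u = z - (d * c⁻¹) • ((c * (B k f)⁻¹) • k + γ • f) := by
      rw [hudef, map_sub, map_smul, hEx, ← hzdef]
    rw [hy₁def, hEu, hbbdef]
    match_scalars <;> (try field_simp) <;> (try ring)
  have hQy₁ : B y₁ y₁ = B u u := by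
    have h1 : B (eich B f w u) (eich B f w u) = B u u := hEiso u u
    have h2 : B (eich B f w u) f = 0 := by
      have h := hEiso u f
      rw [hEf] at h
      rw [h, huf]
    have h3 : B f (eich B f w u) = 0 := by rw [hBsymm]; exact h2
    rw [hy₁E]
    simp only [map_add, map_smul, LinearMap.add_apply, LinearMap.smul_apply, smul_eq_mul,
      h1, h2, h3, hff]
    ring
  have hQy₁ne : B y₁ y₁ ≠ 0 := by rw [hQy₁]; exact hQu
  obtain ⟨μ, hμ⟩ := IsAlgClosed.exists_pow_nat_eq (B y₁ y₁ / B τ τ) (n := 2) (by norm_num)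
  have hμτ : B (μ • τ) (μ • τ) = B y₁ y₁ := by
    simp only [map_smul, LinearMap.smul_apply, smul_eq_mul]
    have h5 : μ ^ 2 * B τ τ = B y₁ y₁ := by rw [hμ]; field_simp
    linear_combination h5
  have hμτf : B (μ • τ) f = 0 := by
    simp only [map_smul, LinearMap.smul_apply, smul_eq_mul, hτf]; ring
  have hμτk : B (μ • τ) k = 0 := by
    simp only [map_smul, LinearMap.smul_apply, smul_eq_mul, hτk]; ring
  obtain ⟨v, hvf, hvk, hvτ, hvv⟩ := exists_aniso B f hdim hBsymm hBnd k τ hff hkf hττ hτk hτf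
  obtain ⟨u₁, u₂, hu₁, hu₂, hu₁f, hu₁k, hu₂f, hu₂k, himg⟩ :
      ∃ u₁ u₂ : V, B u₁ u₁ ≠ 0 ∧ B u₂ u₂ ≠ 0 ∧ B u₁ f = 0 ∧ B u₁ k = 0 ∧
        B u₂ f = 0 ∧ B u₂ k = 0 ∧ bref B u₂ (bref B u₁ y₁) = μ • τ := by
    have hexp1 : B (y₁ - μ • τ) (y₁ - μ • τ) =
        B y₁ y₁ - μ * B y₁ τ - μ * B τ y₁ + μ * (μ * B τ τ) := by
      simp only [map_sub, map_smul, LinearMap.sub_apply, LinearMap.smul_apply, smul_eq_mul]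
      ring
    rcases ne_or_eq (B (y₁ - μ • τ) (y₁ - μ • τ)) 0 with hcase | hcase
    · refine ⟨y₁ - μ • τ, v, hcase, hvv, ?_, ?_, hvf, hvk, ?_⟩
      · simp only [map_sub, map_smul, LinearMap.sub_apply, LinearMap.smul_apply, smul_eq_mul,
          hy₁f, hτf]
        ring
      · simp only [map_sub, map_smul, LinearMap.sub_apply, LinearMap.smul_apply, smul_eq_mul,
          hy₁k, hτk]
        ring
      · rw [bref_map B hBsymm hcase hμτ.symm rfl]
        exact bref_fix B (μ • τ)
          (by simp only [map_smul, smul_eq_mul, hvτ]; ring)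
    · have hμ2 : μ * (μ * B τ τ) = B y₁ y₁ := by
        have h5 : μ ^ 2 * B τ τ = B y₁ y₁ := by rw [hμ]; field_simp
        linear_combination h5
      have hexp2 : B (y₁ + μ • τ) (y₁ + μ • τ) =
          B y₁ y₁ + μ * B y₁ τ + μ * B τ y₁ + μ * (μ * B τ τ) := by
        simp only [map_add, map_smul, LinearMap.add_apply, LinearMap.smul_apply, smul_eq_mul]
        ring
      rw [hexp1] at hcase
      have hu₁ne : B (y₁ + μ • τ) (y₁ + μ • τ) ≠ 0 := by
        rw [hexp2]
        have h4 : B y₁ y₁ + μ * B y₁ τ + μ * B τ y₁ + μ * (μ * B τ τ) = 4 * B y₁ y₁ := by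
          linear_combination (-1 : ℂ) * hcase + 2 * hμ2
        rw [h4]
        exact mul_ne_zero (by norm_num) hQy₁ne
      have hμτQ : B (μ • τ) (μ • τ) ≠ 0 := by rw [hμτ]; exact hQy₁ne
      refine ⟨y₁ + μ • τ, μ • τ, hu₁ne, hμτQ, ?_, ?_, hμτf, hμτk, ?_⟩
      · simp only [map_add, map_smul, LinearMap.add_apply, LinearMap.smul_apply, smul_eq_mul,
          hy₁f, hτf]
        ring
      · simp only [map_add, map_smul, LinearMap.add_apply, LinearMap.smul_apply, smul_eq_mul,
          hy₁k, hτk]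
        ring
      · have hmap : bref B (y₁ + μ • τ) y₁ = -(μ • τ) := by
          refine bref_map B hBsymm hu₁ne ?_ ?_
          · simpa using hμτ.symm
          · rw [sub_neg_eq_add]
        rw [hmap, map_neg, bref_neg_self B hμτQ, neg_neg]
  set T : V ≃ₗ[ℂ] V :=
    ((eichE B f hBsymm hff hwf).trans (brefE B u₁ hu₁)).trans (brefE B u₂ hu₂) with hTdef
  have hTapp : ∀ a : V, T a = bref B u₂ (bref B u₁ (eich B f w a)) := by
    intro a
    rw [hTdef]
    rw [LinearEquiv.trans_apply, LinearEquiv.trans_apply, eichE_apply, brefE_apply, brefE_apply]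
  have hTiso : ∀ a b : V, B (T a) (T b) = B a b := by
    intro a b
    rw [hTapp, hTapp, bref_isometry B hBsymm hu₂, bref_isometry B hBsymm hu₁, hEiso]
  have hTdet : LinearMap.det (T : V →ₗ[ℂ] V) = 1 := by
    have hcoe : (T : V →ₗ[ℂ] V) = (bref B u₂) ∘ₗ ((bref B u₁) ∘ₗ (eich B f w)) := by
      rw [hTdef]
      rw [LinearEquiv.coe_trans, LinearEquiv.coe_trans, brefE_coe, brefE_coe, eichE_coe]
    rw [hcoe, LinearMap.det_comp, LinearMap.det_comp, bref_det B bV hu₂, bref_det B bV hu₁,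
      eich_det B f hBsymm hBnd bV hff hwf]
    ring
  have hTf : T f = f := by
    rw [hTapp, hEf, bref_fix B f hu₁f, bref_fix B f hu₂f]
  refine ⟨T, hTiso, hTdet, hTf, ?_, ?_⟩
  · rw [hTapp, hEx]
    simp only [map_add, map_smul]
    rw [bref_fix B k hu₁k, bref_fix B f hu₁f, bref_fix B k hu₂k, bref_fix B f hu₂f]
    exact Submodule.add_mem _
      (Submodule.smul_mem _ _ (Submodule.subset_span (by simp)))
      (Submodule.smul_mem _ _ (Submodule.subset_span (by simp)))
  · have hz' : z = y₁ + (aa • f + bb • k) := by rw [hy₁def]; abel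
    have hTy : T y = bref B u₂ (bref B u₁ z) := hTapp y
    rw [hTy, hz']
    simp only [map_add, map_smul]
    rw [bref_fix B f hu₁f, bref_fix B k hu₁k, bref_fix B f hu₂f, bref_fix B k hu₂k, himg]
    refine Submodule.add_mem _ (Submodule.smul_mem _ _ (Submodule.subset_span (by simp))) ?_
    exact Submodule.add_mem _
      (Submodule.smul_mem _ _ (Submodule.subset_span (by simp)))
      (Submodule.smul_mem _ _ (Submodule.subset_span (by simp)))


end Helpers

/-- Let `V` be a finite-dimensional complex vector space with `dim V ≥ 4`,
with a nondegenerate symmetric bilinear form `B`.  Fix `f k τ : V` with `B f f = 0`,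
`B k f ≠ 0`, `B τ τ ≠ 0`, `B τ k = B τ f = 0`.  Let `W₀ = span {f, k}` and
`W₁ = span {f, k, τ}`.  If `P, P'` are polynomial maps `V × V → ℂ`, invariant under the
diagonal action of `SO(V; f)`, which agree on `W₀ × W₁`, then `P = P'` everywhere. -/
theorem stmt1 {V : Type*} [AddCommGroup V] [Module ℂ V] [FiniteDimensional ℂ V]
    (hdim : 4 ≤ Module.finrank ℂ V)
    (B : V →ₗ[ℂ] V →ₗ[ℂ] ℂ)
    (hBsymm : ∀ x y : V, B x y = B y x)
    (hBnd : ∀ x : V, (∀ y : V, B x y = 0) → x = 0)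
    (f k τ : V)
    (hff : B f f = 0) (hkf : B k f ≠ 0) (hττ : B τ τ ≠ 0)
    (hτk : B τ k = 0) (hτf : B τ f = 0)
    (P P' : V → V → ℂ)
    {ι : Type*} [Fintype ι] (bV : Module.Basis ι ℂ V)
    (p p' : MvPolynomial (ι ⊕ ι) ℂ)
    (hpoly : ∀ x y : V, P x y =
      MvPolynomial.eval (Sum.elim (fun i => bV.repr x i) (fun i => bV.repr y i)) p)
    (hpoly' : ∀ x y : V, P' x y =
      MvPolynomial.eval (Sum.elim (fun i => bV.repr x i) (fun i => bV.repr y i)) p')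
    (hinv : ∀ T : V ≃ₗ[ℂ] V, (∀ x y : V, B (T x) (T y) = B x y) →
      LinearMap.det (T : V →ₗ[ℂ] V) = 1 → T f = f → ∀ x y : V, P (T x) (T y) = P x y)
    (hinv' : ∀ T : V ≃ₗ[ℂ] V, (∀ x y : V, B (T x) (T y) = B x y) →
      LinearMap.det (T : V →ₗ[ℂ] V) = 1 → T f = f → ∀ x y : V, P' (T x) (T y) = P' x y)
    (hagree : ∀ x ∈ Submodule.span ℂ ({f, k} : Set V),
      ∀ y ∈ Submodule.span ℂ ({f, k, τ} : Set V), P x y = P' x y) :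
    ∀ x y : V, P x y = P' x y := by
  classical
  -- The "generic" criterion for a pair of points
  have key : ∀ x y : V, B x f ≠ 0 →
      B (B x f • y - B y f • x) (B x f • y - B y f • x) ≠ 0 → P x y = P' x y := by
    intro x y hc hD
    obtain ⟨T, hTiso, hTdet, hTf, hTx, hTy⟩ :=
      exists_T B f bV hdim hBsymm hBnd k τ hff hkf hττ hτk hτf x y hc hD
    calc P x y = P (T x) (T y) := (hinv T hTiso hTdet hTf x y).symm
      _ = P' (T x) (T y) := hagree _ hTx _ hTy
      _ = P' x y := hinv' T hTiso hTdet hTf x y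
  -- polynomial machinery
  set vec : (ι ⊕ ι → ℂ) → (ι → ι ⊕ ι) → V := fun σ e => ∑ i, σ (e i) • bV i with hvec
  set Lp : V → (ι → ι ⊕ ι) → MvPolynomial (ι ⊕ ι) ℂ := fun v e =>
    ∑ i, MvPolynomial.C (B (bV i) v) * MvPolynomial.X (e i) with hLp
  set Qp : (ι → ι ⊕ ι) → (ι → ι ⊕ ι) → MvPolynomial (ι ⊕ ι) ℂ := fun e e' =>
    ∑ i, ∑ j, MvPolynomial.C (B (bV i) (bV j)) * MvPolynomial.X (e i) *
      MvPolynomial.X (e' j) with hQp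
  have hevalL : ∀ (σ : ι ⊕ ι → ℂ) (v : V) (e : ι → ι ⊕ ι),
      MvPolynomial.eval σ (Lp v e) = B (vec σ e) v := by
    intro σ v e
    simp only [hLp, hvec, map_sum, MvPolynomial.eval_mul, MvPolynomial.eval_C,
      MvPolynomial.eval_X, LinearMap.sum_apply, map_smul, LinearMap.smul_apply, smul_eq_mul]
    exact Finset.sum_congr rfl fun i _ => mul_comm _ _
  have hbil : ∀ c d : ι → ℂ, B (∑ i, c i • bV i) (∑ j, d j • bV j) =
      ∑ i, ∑ j, c i * d j * B (bV i) (bV j) := by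
    intro c d
    have h1 : B (∑ i, c i • bV i) = ∑ i, c i • B (bV i) := by
      rw [map_sum]; simp only [map_smul]
    rw [h1, LinearMap.sum_apply]
    refine Finset.sum_congr rfl fun i _ => ?_
    rw [LinearMap.smul_apply, map_sum, smul_eq_mul, Finset.mul_sum]
    refine Finset.sum_congr rfl fun j _ => ?_
    rw [map_smul, smul_eq_mul]
    ring
  have hevalQ : ∀ (σ : ι ⊕ ι → ℂ) (e e' : ι → ι ⊕ ι),
      MvPolynomial.eval σ (Qp e e') = B (vec σ e) (vec σ e') := by
    intro σ e e'
    have h2 := hbil (fun i => σ (e i)) (fun j => σ (e' j))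
    rw [show vec σ e = ∑ i, σ (e i) • bV i from rfl,
      show vec σ e' = ∑ i, σ (e' i) • bV i from rfl, h2]
    simp only [hQp, map_sum, MvPolynomial.eval_mul, MvPolynomial.eval_C, MvPolynomial.eval_X]
    refine Finset.sum_congr rfl fun i _ => Finset.sum_congr rfl fun j _ => by ring
  set g : MvPolynomial (ι ⊕ ι) ℂ :=
    Lp f Sum.inl * ((Lp f Sum.inl) ^ 2 * Qp Sum.inr Sum.inr
      - Lp f Sum.inl * Lp f Sum.inr * Qp Sum.inr Sum.inl
      - Lp f Sum.inl * Lp f Sum.inr * Qp Sum.inl Sum.inr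
      + (Lp f Sum.inr) ^ 2 * Qp Sum.inl Sum.inl) with hg
  have hevalg : ∀ σ : ι ⊕ ι → ℂ,
      MvPolynomial.eval σ g = B (vec σ Sum.inl) f *
        B (B (vec σ Sum.inl) f • vec σ Sum.inr - B (vec σ Sum.inr) f • vec σ Sum.inl)
          (B (vec σ Sum.inl) f • vec σ Sum.inr - B (vec σ Sum.inr) f • vec σ Sum.inl) := by
    intro σ
    simp only [hg, map_mul, map_add, map_sub, map_pow, hevalL, hevalQ,
      map_smul, LinearMap.sub_apply, LinearMap.smul_apply, smul_eq_mul]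
    ring
  -- the coordinates of x and y recover σ
  have hσrec : ∀ σ : ι ⊕ ι → ℂ,
      Sum.elim (fun i => bV.repr (vec σ Sum.inl) i) (fun i => bV.repr (vec σ Sum.inr) i) = σ := by
    intro σ
    funext s
    cases s with
    | inl i =>
      simp only [Sum.elim_inl, hvec]
      exact congrFun (bV.repr_sum_self fun j => σ (Sum.inl j)) i
    | inr i =>
      simp only [Sum.elim_inr, hvec]
      exact congrFun (bV.repr_sum_self fun j => σ (Sum.inr j)) i
  have hg0 : g ≠ 0 := by
    intro h0
    set σ0 : ι ⊕ ι → ℂ := Sum.elim (fun i => bV.repr k i) (fun i => bV.repr τ i) with hσ0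
    have hx0 : vec σ0 Sum.inl = k := by
      simp only [hvec, hσ0, Sum.elim_inl]
      exact bV.sum_repr k
    have hy0 : vec σ0 Sum.inr = τ := by
      simp only [hvec, hσ0, Sum.elim_inr]
      exact bV.sum_repr τ
    have := hevalg σ0
    rw [h0, map_zero, hx0, hy0, hτf] at this
    simp only [zero_smul, sub_zero, map_smul, LinearMap.smul_apply, smul_eq_mul] at this
    have : B k f * (B k f * (B k f * B τ τ)) = 0 := by linear_combination -this
    simp only [mul_eq_zero] at this
    tauto
  have hzero : ∀ σ : ι ⊕ ι → ℂ, MvPolynomial.eval σ ((p - p') * g) = 0 := by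
    intro σ
    rw [map_mul]
    rcases eq_or_ne (MvPolynomial.eval σ g) 0 with h | h
    · rw [h, mul_zero]
    · have hge := hevalg σ
      rw [hge] at h
      have hc : B (vec σ Sum.inl) f ≠ 0 := fun hc0 => h (by rw [hc0, zero_mul])
      have hD : B (B (vec σ Sum.inl) f • vec σ Sum.inr - B (vec σ Sum.inr) f • vec σ Sum.inl)
          (B (vec σ Sum.inl) f • vec σ Sum.inr - B (vec σ Sum.inr) f • vec σ Sum.inl) ≠ 0 :=
        fun hD0 => h (by rw [hD0, mul_zero])
      have hP := key (vec σ Sum.inl) (vec σ Sum.inr) hc hD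
      rw [hpoly, hpoly', hσrec σ] at hP
      rw [map_sub, hP, sub_self, zero_mul]
  have hfun : (p - p') * g = 0 := MvPolynomial.funext hzero
  have hpp' : p = p' := by
    rcases mul_eq_zero.mp hfun with h | h
    · exact sub_eq_zero.mp h
    · exact absurd h hg0
  intro x y
  rw [hpoly, hpoly', hpp']
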